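/- Let U be an n×n unitary complex matrix with symmetric support (U i j ≠ 0 ↔ U j i ≠ 0) and with zero diagonal (U i i = 0 for all i). Then there exists a fixed-point-free permutation σ of the index set (σ i ≠ i for all i) such that U i (σ i) ≠ 0 for every i. (In graph language: a loopless graph that supports a unitary matrix has a perfect 2-matching, i.e., a spanning subgraph consisting of vertex-disjoint edges and cycles.) -/

import Mathlib

/-- Proposition: a loopless graph supporting a unitary matrix has a perfect 2-matching:
there is a fixed-point-free permutation `σ` with `U i (σ i) ≠ 0` for every `i`. -/
theorem stmt_17 (n : ℕ) (U : Matrix (Fin n) (Fin n) ℂ)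
    (hU : U ∈ Matrix.unitaryGroup (Fin n) ℂ)
    (hsym : ∀ i j, U i j ≠ 0 ↔ U j i ≠ 0)
    (hdiag : ∀ i, U i i = 0) :
    ∃ σ : Equiv.Perm (Fin n), (∀ i, σ i ≠ i) ∧ ∀ i, U i (σ i) ≠ 0 := by
  have h1 : star U * U = 1 := hU.1
  have hdet : U.det ≠ 0 := by
    intro h
    have h2 := congrArg Matrix.det h1
    simp [Matrix.det_mul, h] at h2
  have hex : ∃ σ : Equiv.Perm (Fin n), ∏ i, U (σ i) i ≠ 0 := by
    by_contra h
    push_neg at h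
    apply hdet
    rw [Matrix.det_apply]
    exact Finset.sum_eq_zero fun σ _ => by rw [h σ, smul_zero]
  obtain ⟨σ, hσ⟩ := hex
  have hne : ∀ i, U (σ i) i ≠ 0 := fun i =>
    Finset.prod_ne_zero_iff.mp hσ i (Finset.mem_univ i)
  refine ⟨σ⁻¹, fun i hi => ?_, fun i => ?_⟩
  · have := hne (σ⁻¹ i)
    rw [← Equiv.Perm.mul_apply, mul_inv_cancel, Equiv.Perm.one_apply, hi, hdiag i] at this
    exact this rfl
  · have := hne (σ⁻¹ i)
    rwa [← Equiv.Perm.mul_apply, mul_inv_cancel, Equiv.Perm.one_apply] at this
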